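/- Let G be a labelled acyclic directed multigraph and X_1, X_2, Y = V(G)\setminus(X_1 \cup X_2) three disjoint nonempty subsets of V(G). Suppose: (i) each largest set of equally-labelled arcs of [X_1,Y] arc-induces a complete bipartite subgraph of G; (ii) each largest set of equally-labelled arcs of [Y,X_2] arc-induces a complete bipartite subgraph of G; (iii) no label of an arc of [X_1,X_2] occurs on any arc of [X_1,Y] \cup [Y,X_2]; (iv) the arcs of G/X_1/X_2 and G/Y corresponding to arcs of [X_1,Y] \cup [Y,X_2] \cup [X_1,X_2] are the only synchronising arcs of G/X_1/X_2 and G/Y; (v) all in-degree-0 vertices of G lie in X_1; (vi) [X_1,Y], [Y,X_2], [X_1,X_2] have no backward arcs. Then G is isomorphic to (G/Y) \boxbackslash (G/X_1/X_2). -/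

import Mathlib

/-- A labelled directed multigraph: vertex type `V`, arc type `A`, label type `L`,
incidence function `mu` giving (tail, head), and arc labelling `lab`. -/
structure LDMG (V A L : Type) where
  mu : A → V × V
  lab : A → L

namespace LDMG

variable {V A L V' A' : Type}

/-- The one-step arc relation. -/
def step (G : LDMG V A L) (u v : V) : Prop := ∃ a, G.mu a = (u, v)

/-- `G` is acyclic: no directed cycle. -/
def Acyclic (G : LDMG V A L) : Prop := ∀ v, ¬ Relation.TransGen G.step v v

/-- `v` has in-degree 0 in `G`. -/
def InDegZero (G : LDMG V A L) (v : V) : Prop := ∀ a, (G.mu a).2 ≠ v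

/-- `v` has out-degree 0 in `G`. -/
def OutDegZero (G : LDMG V A L) (v : V) : Prop := ∀ a, (G.mu a).1 ≠ v

/-- `peel G n`: the set of vertices deleted after `n` rounds of repeatedly removing the
vertices of in-degree 0 (together with the arcs with tails there). -/
def peel (G : LDMG V A L) : ℕ → Set V
  | 0 => ∅
  | n + 1 => peel G n ∪ {v | ∀ a, (G.mu a).2 = v → (G.mu a).1 ∈ peel G n}

/-- The level set `S^n(G)`. -/
def levelSet (G : LDMG V A L) (n : ℕ) : Set V := peel G (n + 1) \ peel G n

/-- Vertex type of the contraction `G/X`: the vertices outside `X` together with one new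
vertex (`Sum.inr ()`) replacing `X`. -/
def CVertex (X : Set V) : Type := {v : V // v ∉ X} ⊕ Unit

/-- Canonical projection of vertices to contraction vertices. -/
noncomputable def cMap (X : Set V) (v : V) : CVertex X :=
  haveI := Classical.propDecidable (v ∈ X)
  if h : v ∈ X then Sum.inr () else Sum.inl ⟨v, h⟩

/-- The arcs of `G` surviving the contraction of `X` (i.e. not having both ends in `X`),
before identification of parallel equally-labelled arcs. -/
def CPre (G : LDMG V A L) (X : Set V) : Type :=
  {a : A // ¬ ((G.mu a).1 ∈ X ∧ (G.mu a).2 ∈ X)}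

noncomputable def cKey (G : LDMG V A L) (X : Set V) (a : CPre G X) :
    (CVertex X × CVertex X) × L :=
  ((cMap X (G.mu a.1).1, cMap X (G.mu a.1).2), G.lab a.1)

/-- Arc type of `G/X`: surviving arcs, with arcs having identical tail, head and label
identified. -/
def CArc (G : LDMG V A L) (X : Set V) : Type :=
  Quotient (Setoid.ker (cKey G X))

/-- The contraction `G/X`. -/
noncomputable def contract (G : LDMG V A L) (X : Set V) : LDMG (CVertex X) (CArc G X) L where
  mu := Quotient.lift (fun a => (cKey G X a).1) (fun _ _ h => congrArg Prod.fst h)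
  lab := Quotient.lift (fun a => (cKey G X a).2) (fun _ _ h => congrArg Prod.snd h)

/-- The Cartesian product `G □ H`. -/
def box (G : LDMG V A L) (H : LDMG V' A' L) : LDMG (V × V') (A × V' ⊕ V × A') L where
  mu := fun x =>
    match x with
    | Sum.inl (a, w) => (((G.mu a).1, w), ((G.mu a).2, w))
    | Sum.inr (u, b) => ((u, (H.mu b).1), (u, (H.mu b).2))
  lab := fun x =>
    match x with
    | Sum.inl (a, _) => G.lab a
    | Sum.inr (_, b) => H.lab b

/-- The label `ℓ` occurs in `G`. -/
def HasLab (G : LDMG V A L) (ℓ : L) : Prop := ∃ a, G.lab a = ℓ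

/-- Arc type of the intermediate product `G ⊠ H`: asynchronous copies of arcs of `G`
(whose label does not occur in `H`), asynchronous copies of arcs of `H` (whose label
does not occur in `G`), and synchronous arcs for pairs of equally labelled arcs. -/
def InterArc (G : LDMG V A L) (H : LDMG V' A' L) : Type :=
  {p : A × V' // ¬ H.HasLab (G.lab p.1)} ⊕
  {p : V × A' // ¬ G.HasLab (H.lab p.2)} ⊕
  {p : A × A' // G.lab p.1 = H.lab p.2}

/-- The intermediate product `G ⊠ H`. -/
def inter (G : LDMG V A L) (H : LDMG V' A' L) : LDMG (V × V') (InterArc G H) L where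
  mu := fun x =>
    match x with
    | Sum.inl ⟨(a, w), _⟩ => (((G.mu a).1, w), ((G.mu a).2, w))
    | Sum.inr (Sum.inl ⟨(u, b), _⟩) => ((u, (H.mu b).1), (u, (H.mu b).2))
    | Sum.inr (Sum.inr ⟨(a, b), _⟩) => (((G.mu a).1, (H.mu b).1), ((G.mu a).2, (H.mu b).2))
  lab := fun x =>
    match x with
    | Sum.inl ⟨(a, _), _⟩ => G.lab a
    | Sum.inr (Sum.inl ⟨(_, b), _⟩) => H.lab b
    | Sum.inr (Sum.inr ⟨(a, _), _⟩) => G.lab a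

/-- `v` has positive level in `G □ H`, i.e. some in-arc in the Cartesian product. -/
def PosLevelBox (G : LDMG V A L) (H : LDMG V' A' L) (v : V × V') : Prop :=
  ∃ x, ((G.box H).mu x).2 = v

/-- The set of vertices removed after `n` rounds of the VRSP removal process: repeatedly
remove the vertices having in-degree 0 in the current graph but positive level in `G □ H`
(together with their out-arcs). -/
def vrspRem (G : LDMG V A L) (H : LDMG V' A' L) : ℕ → Set (V × V')
  | 0 => ∅
  | n + 1 => vrspRem G H n ∪
      {v | PosLevelBox G H v ∧
        ∀ x, ((G.inter H).mu x).2 = v → ((G.inter H).mu x).1 ∈ vrspRem G H n}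

/-- All vertices eventually removed in the VRSP removal process. -/
def vrspRemoved (G : LDMG V A L) (H : LDMG V' A' L) : Set (V × V') := ⋃ n, vrspRem G H n

/-- Vertex type of the vertex-removing synchronised product `G ⊟ H`. -/
def VrspV (G : LDMG V A L) (H : LDMG V' A' L) : Type := {v : V × V' // v ∉ vrspRemoved G H}

/-- Arc type of `G ⊟ H`: arcs of `G ⊠ H` with both ends surviving. -/
def VrspArc (G : LDMG V A L) (H : LDMG V' A' L) : Type :=
  {x : InterArc G H // ((G.inter H).mu x).1 ∉ vrspRemoved G H ∧
    ((G.inter H).mu x).2 ∉ vrspRemoved G H}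

/-- The vertex-removing synchronised product `G ⊟ H`. -/
def vrsp (G : LDMG V A L) (H : LDMG V' A' L) : LDMG (VrspV G H) (VrspArc G H) L where
  mu := fun x => (⟨((G.inter H).mu x.1).1, x.2.1⟩, ⟨((G.inter H).mu x.1).2, x.2.2⟩)
  lab := fun x => (G.inter H).lab x.1

/-- Isomorphism of labelled directed multigraphs: a vertex bijection preserving the
existence of arcs together with their labels. -/
def Iso (G : LDMG V A L) {V' A' : Type} (H : LDMG V' A' L) : Prop :=
  ∃ φ : V ≃ V', ∀ u v ℓ,
    (∃ a, G.mu a = (u, v) ∧ G.lab a = ℓ) ↔ (∃ b, H.mu b = (φ u, φ v) ∧ H.lab b = ℓ)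

end LDMG

/-- The image of `X₂` inside the vertex set of `G/X₁`. -/
def LDMG.imgIn {V : Type} (X1 X2 : Set V) : Set (LDMG.CVertex X1) :=
  {w | ∃ v : V, ∃ h : v ∉ X1, v ∈ X2 ∧ w = Sum.inl ⟨v, h⟩}
namespace LDMG

variable {V A L : Type}

lemma cMap_mem {X : Set V} {v : V} (h : v ∈ X) : cMap X v = Sum.inr () := by
  simp [cMap, h]
  rfl

lemma cMap_not_mem {X : Set V} {v : V} (h : v ∉ X) : cMap X v = Sum.inl ⟨v, h⟩ := by
  simp [cMap, h]
  rfl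

lemma cMap_eq_inr {X : Set V} {v : V} (h : cMap X v = Sum.inr ()) : v ∈ X := by
  by_contra hv
  rw [cMap_not_mem hv] at h
  exact absurd h (by simp)

lemma cMap_eq_inl {X : Set V} {v : V} {w : {x : V // x ∉ X}}
    (h : cMap X v = Sum.inl w) : v = w.1 := by
  by_cases hv : v ∈ X
  · rw [cMap_mem hv] at h; exact absurd h (by simp)
  · rw [cMap_not_mem hv] at h
    exact congrArg Subtype.val (Sum.inl.inj h)

lemma contract_mu_mk (G : LDMG V A L) (X : Set V) (a : CPre G X) :
    (G.contract X).mu (Quotient.mk _ a) = (cMap X (G.mu a.1).1, cMap X (G.mu a.1).2) := rfl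

lemma contract_lab_mk (G : LDMG V A L) (X : Set V) (a : CPre G X) :
    (G.contract X).lab (Quotient.mk _ a) = G.lab a.1 := rfl

lemma contract_arc_elim (G : LDMG V A L) (X : Set V) (α : CArc G X) :
    ∃ a : A, ∃ h : ¬ ((G.mu a).1 ∈ X ∧ (G.mu a).2 ∈ X),
      (G.contract X).mu α = (cMap X (G.mu a).1, cMap X (G.mu a).2) ∧
      (G.contract X).lab α = G.lab a := by
  obtain ⟨⟨a, ha⟩, rfl⟩ := Quotient.exists_rep α
  exact ⟨a, ha, rfl, rfl⟩

lemma contract_hasLab (G : LDMG V A L) (X : Set V) {ℓ : L} :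
    (G.contract X).HasLab ℓ ↔
      ∃ a : A, ¬ ((G.mu a).1 ∈ X ∧ (G.mu a).2 ∈ X) ∧ G.lab a = ℓ := by
  constructor
  · rintro ⟨α, hα⟩
    obtain ⟨a, h, _, hl⟩ := contract_arc_elim G X α
    exact ⟨a, h, hl ▸ hα⟩
  · rintro ⟨a, h, hl⟩
    exact ⟨Quotient.mk _ ⟨a, h⟩, hl⟩

lemma inr_not_mem_imgIn (X1 X2 : Set V) : Sum.inr () ∉ imgIn X1 X2 := by
  rintro ⟨v, h, _, hc⟩; exact absurd hc (by simp)

lemma inl_mem_imgIn {X1 X2 : Set V} {v : V} (h : v ∉ X1) :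
    (Sum.inl ⟨v, h⟩ : CVertex X1) ∈ imgIn X1 X2 ↔ v ∈ X2 := by
  constructor
  · rintro ⟨w, hw, hw2, hc⟩
    obtain rfl : v = w := congrArg Subtype.val (Sum.inl.inj hc)
    exact hw2
  · intro hv; exact ⟨v, h, hv, rfl⟩

end LDMG
namespace LDMG
variable {V A L V' A' : Type}

open Classical in
/-- Height: number of strict ancestors. -/
noncomputable def height [Fintype V] (G : LDMG V A L) (v : V) : ℕ :=
  (Finset.univ.filter (fun u => Relation.TransGen G.step u v)).card

lemma height_lt [Fintype V] {G : LDMG V A L} (hacyc : G.Acyclic) {a : A} :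
    G.height (G.mu a).1 < G.height (G.mu a).2 := by
  classical
  apply Finset.card_lt_card
  constructor
  · intro u hu
    simp only [Finset.mem_filter, Finset.mem_univ, true_and] at hu ⊢
    exact hu.trans (Relation.TransGen.single ⟨a, by simp⟩)
  · intro hsub
    have h1 : (G.mu a).1 ∈ Finset.univ.filter
        (fun u => Relation.TransGen G.step u (G.mu a).2) := by
      simp only [Finset.mem_filter, Finset.mem_univ, true_and]
      exact Relation.TransGen.single ⟨a, by simp⟩
    have h2 := hsub h1
    simp only [Finset.mem_filter, Finset.mem_univ, true_and] at h2
    exact hacyc _ h2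

/-- In a nonempty set where every vertex has an in-arc, some vertex has all its
in-arcs coming from outside the set. -/
lemma exists_min [Fintype V] {G : LDMG V A L} (hacyc : G.Acyclic) {S : Set V}
    (hne : S.Nonempty) :
    ∃ v ∈ S, ∀ a : A, (G.mu a).2 = v → (G.mu a).1 ∉ S := by
  classical
  obtain ⟨v, hv⟩ := hne
  obtain ⟨m, hm, hmin⟩ := Finset.exists_min_image
    (Finset.univ.filter (fun u => u ∈ S)) (G.height) ⟨v, by simpa using hv⟩
  simp only [Finset.mem_filter, Finset.mem_univ, true_and] at hm
  refine ⟨m, hm, fun a ha hta => ?_⟩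
  have := hmin (G.mu a).1 (by simpa using hta)
  have hlt := height_lt hacyc (a := a)
  rw [ha] at hlt
  omega

lemma vrspRem_mono (G : LDMG V A L) (H : LDMG V' A' L) {m n : ℕ} (h : m ≤ n) :
    vrspRem G H m ⊆ vrspRem G H n := by
  induction n with
  | zero => simpa [Nat.le_zero.mp h] using Set.Subset.rfl
  | succ n ih =>
    rcases Nat.lt_or_ge m (n+1) with h' | h'
    · exact (ih (Nat.lt_succ_iff.mp h')).trans (Set.subset_union_left)
    · have : m = n + 1 := le_antisymm h h'
      subst this; rfl

lemma mem_vrspRemoved {G : LDMG V A L} {H : LDMG V' A' L} {z : V × V'}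
    (hpos : PosLevelBox G H z)
    (hall : ∀ x, ((G.inter H).mu x).2 = z → ((G.inter H).mu x).1 ∈ vrspRemoved G H)
    [Fintype A] [Fintype V'] [Fintype V] [Fintype A'] :
    z ∈ vrspRemoved G H := by
  classical
  -- choose a uniform stage
  have hfin : ∃ n, ∀ x, ((G.inter H).mu x).2 = z → ((G.inter H).mu x).1 ∈ vrspRem G H n := by
    have : ∀ x : InterArc G H, ∃ n, ((G.inter H).mu x).2 = z → ((G.inter H).mu x).1 ∈ vrspRem G H n := by
      intro x
      by_cases hx : ((G.inter H).mu x).2 = z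
      · obtain ⟨n, hn⟩ := Set.mem_iUnion.mp (hall x hx)
        exact ⟨n, fun _ => hn⟩
      · exact ⟨0, fun h => absurd h hx⟩
    choose f hf using this
    haveI : Fintype (InterArc G H) := by
      unfold InterArc; infer_instance
    refine ⟨(Finset.univ : Finset (InterArc G H)).sup f, fun x hx => ?_⟩
    exact vrspRem_mono G H (Finset.le_sup (by simp)) (hf x hx)
  obtain ⟨n, hn⟩ := hfin
  exact Set.mem_iUnion.mpr ⟨n + 1, Or.inr ⟨hpos, hn⟩⟩

end LDMG
namespace LDMG

structure Ctx (V A L : Type) [Fintype V] [Fintype A] where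
  G : LDMG V A L
  X1 : Set V
  X2 : Set V
  Y : Set V
  hX1ne : X1.Nonempty
  hX2ne : X2.Nonempty
  hYne : Y.Nonempty
  hacyc : G.Acyclic
  hdisj12 : Disjoint X1 X2
  hY : Y = (X1 ∪ X2)ᶜ
  hbip1 : ∀ a b : A,
      (((G.mu a).1 ∈ X1 ∧ (G.mu a).2 ∈ Y) ∨ ((G.mu a).1 ∈ Y ∧ (G.mu a).2 ∈ X1)) →
      (((G.mu b).1 ∈ X1 ∧ (G.mu b).2 ∈ Y) ∨ ((G.mu b).1 ∈ Y ∧ (G.mu b).2 ∈ X1)) →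
      G.lab a = G.lab b →
      ∃ c : A, G.mu c = ((G.mu a).1, (G.mu b).2) ∧ G.lab c = G.lab a
  hbip2 : ∀ a b : A,
      (((G.mu a).1 ∈ Y ∧ (G.mu a).2 ∈ X2) ∨ ((G.mu a).1 ∈ X2 ∧ (G.mu a).2 ∈ Y)) →
      (((G.mu b).1 ∈ Y ∧ (G.mu b).2 ∈ X2) ∨ ((G.mu b).1 ∈ X2 ∧ (G.mu b).2 ∈ Y)) →
      G.lab a = G.lab b →
      ∃ c : A, G.mu c = ((G.mu a).1, (G.mu b).2) ∧ G.lab c = G.lab a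
  hlabsep : ∀ a b : A,
      (((G.mu a).1 ∈ X1 ∧ (G.mu a).2 ∈ X2) ∨ ((G.mu a).1 ∈ X2 ∧ (G.mu a).2 ∈ X1)) →
      ((((G.mu b).1 ∈ X1 ∧ (G.mu b).2 ∈ Y) ∨ ((G.mu b).1 ∈ Y ∧ (G.mu b).2 ∈ X1)) ∨
       (((G.mu b).1 ∈ Y ∧ (G.mu b).2 ∈ X2) ∨ ((G.mu b).1 ∈ X2 ∧ (G.mu b).2 ∈ Y))) →
      G.lab a ≠ G.lab b
  hsync : ∀ a b : A,
      (¬ ((G.mu a).1 ∈ X1 ∧ (G.mu a).2 ∈ X1) ∧ ¬ ((G.mu a).1 ∈ X2 ∧ (G.mu a).2 ∈ X2)) →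
      ¬ ((G.mu b).1 ∈ Y ∧ (G.mu b).2 ∈ Y) →
      G.lab a = G.lab b →
      (∀ c : A, c = a ∨ c = b →
        (((G.mu c).1 ∈ X1 ∧ (G.mu c).2 ∈ Y) ∨ ((G.mu c).1 ∈ Y ∧ (G.mu c).2 ∈ X1)) ∨
        (((G.mu c).1 ∈ Y ∧ (G.mu c).2 ∈ X2) ∨ ((G.mu c).1 ∈ X2 ∧ (G.mu c).2 ∈ Y)) ∨
        (((G.mu c).1 ∈ X1 ∧ (G.mu c).2 ∈ X2) ∨ ((G.mu c).1 ∈ X2 ∧ (G.mu c).2 ∈ X1)))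
  hsource : ∀ v : V, G.InDegZero v → v ∈ X1
  hnoback1 : ∀ a : A, ¬ ((G.mu a).1 ∈ Y ∧ (G.mu a).2 ∈ X1)
  hnoback2 : ∀ a : A, ¬ ((G.mu a).1 ∈ X2 ∧ (G.mu a).2 ∈ Y)
  hnoback3 : ∀ a : A, ¬ ((G.mu a).1 ∈ X2 ∧ (G.mu a).2 ∈ X1)

namespace Ctx

variable {V A L : Type} [Fintype V] [Fintype A] (C : Ctx V A L)

/-- First factor `G/Y`. -/
noncomputable abbrev F1 := C.G.contract C.Y
/-- Second factor `G/X1/X2`. -/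
noncomputable abbrev F2 := (C.G.contract C.X1).contract (imgIn C.X1 C.X2)

/-- Second coordinate of the embedding. -/
noncomputable def psi2 (v : V) : CVertex (imgIn C.X1 C.X2) :=
  cMap (imgIn C.X1 C.X2) (cMap C.X1 v)

/-- The embedding. -/
noncomputable def psi (v : V) : CVertex C.Y × CVertex (imgIn C.X1 C.X2) :=
  (cMap C.Y v, C.psi2 v)

-- basic membership facts
lemma mem_Y_iff {v : V} : v ∈ C.Y ↔ v ∉ C.X1 ∧ v ∉ C.X2 := by
  rw [C.hY]; simp [Set.mem_compl_iff]

lemma tri (v : V) : v ∈ C.X1 ∨ v ∈ C.X2 ∨ v ∈ C.Y := by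
  by_cases h1 : v ∈ C.X1
  · exact Or.inl h1
  by_cases h2 : v ∈ C.X2
  · exact Or.inr (Or.inl h2)
  exact Or.inr (Or.inr (C.mem_Y_iff.mpr ⟨h1, h2⟩))

lemma x1_not_y {v : V} (h : v ∈ C.X1) : v ∉ C.Y := fun hy => (C.mem_Y_iff.mp hy).1 h
lemma x2_not_y {v : V} (h : v ∈ C.X2) : v ∉ C.Y := fun hy => (C.mem_Y_iff.mp hy).2 h
lemma x1_not_x2 {v : V} (h : v ∈ C.X1) : v ∉ C.X2 := fun h2 =>
  Set.disjoint_left.mp C.hdisj12 h h2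
lemma x2_not_x1 {v : V} (h : v ∈ C.X2) : v ∉ C.X1 := fun h1 =>
  Set.disjoint_left.mp C.hdisj12 h1 h
lemma y_not_x1 {v : V} (h : v ∈ C.Y) : v ∉ C.X1 := (C.mem_Y_iff.mp h).1
lemma y_not_x2 {v : V} (h : v ∈ C.Y) : v ∉ C.X2 := (C.mem_Y_iff.mp h).2

lemma cMap_mem_imgIn {v : V} : cMap C.X1 v ∈ imgIn C.X1 C.X2 ↔ v ∈ C.X2 := by
  by_cases h1 : v ∈ C.X1
  · rw [cMap_mem h1]
    simp only [iff_false_intro (C.x1_not_x2 h1)]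
    exact iff_of_false (inr_not_mem_imgIn _ _) (fun h => h)
  · rw [cMap_not_mem h1]; exact inl_mem_imgIn h1

-- canonical vertices
noncomputable def x1t : CVertex (imgIn C.X1 C.X2) :=
  Sum.inl ⟨Sum.inr (), inr_not_mem_imgIn _ _⟩

lemma x1t_ne_inr : C.x1t ≠ Sum.inr () := fun h => by cases h

lemma x1t_ne_inl_inl {w : {x : V // x ∉ C.X1}}
    {hw : (Sum.inl w : CVertex C.X1) ∉ imgIn C.X1 C.X2} :
    C.x1t ≠ Sum.inl ⟨Sum.inl w, hw⟩ := fun h =>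
  by cases h

lemma psi2_x1 {v : V} (h : v ∈ C.X1) : C.psi2 v = C.x1t := by
  unfold psi2 x1t
  rw [cMap_mem h]; exact cMap_not_mem (inr_not_mem_imgIn _ _)

lemma psi2_x2 {v : V} (h : v ∈ C.X2) : C.psi2 v = Sum.inr () := by
  unfold psi2
  rw [cMap_mem (C.cMap_mem_imgIn.mpr h)]

lemma psi2_y {v : V} (h : v ∈ C.Y) :
    ∃ (h1 : v ∉ C.X1) (h2 : (Sum.inl ⟨v, h1⟩ : CVertex C.X1) ∉ imgIn C.X1 C.X2),
      C.psi2 v = Sum.inl ⟨Sum.inl ⟨v, h1⟩, h2⟩ := by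
  have h1 := C.y_not_x1 h
  have h2 : (Sum.inl ⟨v, h1⟩ : CVertex C.X1) ∉ imgIn C.X1 C.X2 := by
    rw [inl_mem_imgIn]; exact C.y_not_x2 h
  refine ⟨h1, h2, ?_⟩
  unfold psi2
  rw [cMap_not_mem h1]; exact cMap_not_mem h2

lemma psi2_eq_inr {v : V} (h : C.psi2 v = Sum.inr ()) : v ∈ C.X2 :=
  C.cMap_mem_imgIn.mp (cMap_eq_inr h)

lemma psi2_eq_x1t {v : V} (h : C.psi2 v = C.x1t) : v ∈ C.X1 := by
  unfold psi2 x1t at h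
  have := cMap_eq_inl h
  simp only at this
  exact cMap_eq_inr this

lemma psi2_eq_inl_inl {v : V} {w : {x : V // x ∉ C.X1}}
    {hw : (Sum.inl w : CVertex C.X1) ∉ imgIn C.X1 C.X2}
    (h2 : (Sum.inl (⟨Sum.inl w, hw⟩ : {x : CVertex C.X1 // x ∉ imgIn C.X1 C.X2}) :
      CVertex (imgIn C.X1 C.X2)) = C.psi2 v) : v = w.1 := by
  unfold psi2 at h2
  have := cMap_eq_inl h2.symm
  simp only at this
  exact cMap_eq_inl this

-- elimination for arcs of F2
lemma f2_elim (α : CArc (C.G.contract C.X1) (imgIn C.X1 C.X2)) :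
    ∃ c : A, ¬ ((C.G.mu c).1 ∈ C.X1 ∧ (C.G.mu c).2 ∈ C.X1) ∧
      ¬ ((C.G.mu c).1 ∈ C.X2 ∧ (C.G.mu c).2 ∈ C.X2) ∧
      C.F2.mu α = (C.psi2 (C.G.mu c).1, C.psi2 (C.G.mu c).2) ∧
      C.F2.lab α = C.G.lab c := by
  obtain ⟨β, hβ, hmu, hlab⟩ := contract_arc_elim (C.G.contract C.X1) (imgIn C.X1 C.X2) α
  obtain ⟨c, hc, hmu', hlab'⟩ := contract_arc_elim C.G C.X1 β
  refine ⟨c, hc, ?_, ?_, ?_⟩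
  · rw [hmu'] at hβ
    intro ⟨h1, h2⟩
    exact hβ ⟨C.cMap_mem_imgIn.mpr h1, C.cMap_mem_imgIn.mpr h2⟩
  · rw [hmu, hmu']; rfl
  · rw [hlab, hlab']

/-- introduction for arcs of F2 -/
lemma f2_mk {c : A} (h1 : ¬ ((C.G.mu c).1 ∈ C.X1 ∧ (C.G.mu c).2 ∈ C.X1))
    (h2 : ¬ ((C.G.mu c).1 ∈ C.X2 ∧ (C.G.mu c).2 ∈ C.X2)) :
    ∃ α : CArc (C.G.contract C.X1) (imgIn C.X1 C.X2),
      C.F2.mu α = (C.psi2 (C.G.mu c).1, C.psi2 (C.G.mu c).2) ∧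
      C.F2.lab α = C.G.lab c := by
  have hβ : ¬ ((((C.G.contract C.X1).mu (Quotient.mk _ ⟨c, h1⟩)).1 ∈ imgIn C.X1 C.X2) ∧
      (((C.G.contract C.X1).mu (Quotient.mk _ ⟨c, h1⟩)).2 ∈ imgIn C.X1 C.X2)) := by
    show ¬ ((cMap C.X1 (C.G.mu c).1) ∈ imgIn C.X1 C.X2 ∧ (cMap C.X1 (C.G.mu c).2) ∈ imgIn C.X1 C.X2)
    intro ⟨ha, hb⟩
    exact h2 ⟨C.cMap_mem_imgIn.mp ha, C.cMap_mem_imgIn.mp hb⟩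
  exact ⟨Quotient.mk _ ⟨Quotient.mk _ ⟨c, h1⟩, hβ⟩, rfl, rfl⟩

lemma f2_hasLab {ℓ : L} :
    C.F2.HasLab ℓ ↔ ∃ c : A, ¬ ((C.G.mu c).1 ∈ C.X1 ∧ (C.G.mu c).2 ∈ C.X1) ∧
      ¬ ((C.G.mu c).1 ∈ C.X2 ∧ (C.G.mu c).2 ∈ C.X2) ∧ C.G.lab c = ℓ := by
  constructor
  · rintro ⟨α, hα⟩
    obtain ⟨c, h1, h2, _, hl⟩ := C.f2_elim α
    exact ⟨c, h1, h2, hl ▸ hα⟩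
  · rintro ⟨c, h1, h2, hl⟩
    obtain ⟨α, _, hl'⟩ := C.f2_mk h1 h2
    exact ⟨α, hl'.trans hl⟩

lemma f1_hasLab {ℓ : L} :
    C.F1.HasLab ℓ ↔
      ∃ c : A, ¬ ((C.G.mu c).1 ∈ C.Y ∧ (C.G.mu c).2 ∈ C.Y) ∧ C.G.lab c = ℓ :=
  contract_hasLab C.G C.Y

/-- labels of arcs internal to `X1` or to `X2` do not occur in `F2` -/
lemma not_f2_lab {a : A} (h : ((C.G.mu a).1 ∈ C.X1 ∧ (C.G.mu a).2 ∈ C.X1) ∨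
    ((C.G.mu a).1 ∈ C.X2 ∧ (C.G.mu a).2 ∈ C.X2)) : ¬ C.F2.HasLab (C.G.lab a) := by
  rw [C.f2_hasLab]
  rintro ⟨b, hb1, hb2, hlab⟩
  have hnY : ¬ ((C.G.mu a).1 ∈ C.Y ∧ (C.G.mu a).2 ∈ C.Y) := by
    rcases h with ⟨h1, _⟩ | ⟨h1, _⟩
    · exact fun hy => C.x1_not_y h1 hy.1
    · exact fun hy => C.x2_not_y h1 hy.1
  have := C.hsync b a ⟨hb1, hb2⟩ hnY hlab (a) (Or.inr rfl)
  rcases h with ⟨h1, h2⟩ | ⟨h1, h2⟩ <;>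
  rcases this with (⟨ht, hh⟩ | ⟨ht, hh⟩) | (⟨ht, hh⟩ | ⟨ht, hh⟩) | (⟨ht, hh⟩ | ⟨ht, hh⟩) <;>
  first
    | exact C.x1_not_y h1 ht
    | exact C.x1_not_y h2 hh
    | exact C.x1_not_x2 h1 ht
    | exact C.x1_not_x2 h2 hh
    | exact C.x2_not_y h1 ht
    | exact C.x2_not_y h2 hh
    | exact C.x2_not_x1 h1 ht
    | exact C.x2_not_x1 h2 hh
    | exact C.x1_not_y h1 hh
    | exact C.x2_not_y h1 hh

/-- labels of arcs internal to `Y` do not occur in `F1` -/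
lemma not_f1_lab {a : A} (h1 : (C.G.mu a).1 ∈ C.Y) (h2 : (C.G.mu a).2 ∈ C.Y) :
    ¬ C.F1.HasLab (C.G.lab a) := by
  rw [C.f1_hasLab]
  rintro ⟨b, hb, hlab⟩
  have ha1 : ¬ ((C.G.mu a).1 ∈ C.X1 ∧ (C.G.mu a).2 ∈ C.X1) :=
    fun h => C.y_not_x1 h1 h.1
  have ha2 : ¬ ((C.G.mu a).1 ∈ C.X2 ∧ (C.G.mu a).2 ∈ C.X2) :=
    fun h => C.y_not_x2 h1 h.1
  have := C.hsync a b ⟨ha1, ha2⟩ hb (hlab.symm) (a) (Or.inl rfl)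
  rcases this with (⟨ht, hh⟩ | ⟨ht, hh⟩) | (⟨ht, hh⟩ | ⟨ht, hh⟩) | (⟨ht, hh⟩ | ⟨ht, hh⟩) <;>
  first
    | exact C.y_not_x1 h1 ht
    | exact C.y_not_x1 h2 hh
    | exact C.y_not_x2 h1 ht
    | exact C.y_not_x2 h2 hh

/-- No arc of `F2` points into the contracted `X1` vertex. -/
lemma no_into_x1t (α : CArc (C.G.contract C.X1) (imgIn C.X1 C.X2)) :
    (C.F2.mu α).2 ≠ C.x1t := by
  intro h
  obtain ⟨c, hc1, _, hmu, _⟩ := C.f2_elim α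
  rw [hmu] at h
  have hhd : (C.G.mu c).2 ∈ C.X1 := C.psi2_eq_x1t h
  have htl : (C.G.mu c).1 ∉ C.X1 := fun ht => hc1 ⟨ht, hhd⟩
  rcases C.tri (C.G.mu c).1 with h1 | h2 | hy
  · exact htl h1
  · exact C.hnoback3 c ⟨h2, hhd⟩
  · exact C.hnoback1 c ⟨hy, hhd⟩

/-- Injectivity of the embedding. -/
lemma psi_inj : Function.Injective C.psi := by
  intro u v h
  have h1 : cMap C.Y u = cMap C.Y v := congrArg Prod.fst h
  have h2 : C.psi2 u = C.psi2 v := congrArg Prod.snd h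
  rcases C.tri u with hu | hu | hu <;> rcases C.tri v with hv | hv | hv
  · exact Subtype.ext_iff.mp
      (Sum.inl.inj ((cMap_not_mem (C.x1_not_y hu)).symm.trans
        (h1.trans (cMap_not_mem (C.x1_not_y hv)))))
  · exact absurd ((C.psi2_x1 hu).symm.trans (h2.trans (C.psi2_x2 hv))) C.x1t_ne_inr
  · obtain ⟨p1, p2, hy⟩ := C.psi2_y hv
    exact absurd ((C.psi2_x1 hu).symm.trans (h2.trans hy)) C.x1t_ne_inl_inl
  · exact absurd ((C.psi2_x2 hu).symm.trans (h2.trans (C.psi2_x1 hv))) (fun h => C.x1t_ne_inr h.symm)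
  · exact Subtype.ext_iff.mp
      (Sum.inl.inj ((cMap_not_mem (C.x2_not_y hu)).symm.trans
        (h1.trans (cMap_not_mem (C.x2_not_y hv)))))
  · obtain ⟨p1, p2, hy⟩ := C.psi2_y hv
    exact absurd ((C.psi2_x2 hu).symm.trans (h2.trans hy)) (fun h => by cases h)
  · obtain ⟨p1, p2, hy⟩ := C.psi2_y hu
    exact absurd (hy.symm.trans (h2.trans (C.psi2_x1 hv))) (fun h => C.x1t_ne_inl_inl h.symm)
  · obtain ⟨p1, p2, hy⟩ := C.psi2_y hu
    exact absurd (hy.symm.trans (h2.trans (C.psi2_x2 hv))) (fun h => by cases h)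
  · obtain ⟨p1, p2, hy⟩ := C.psi2_y hu
    obtain ⟨q1, q2, hy'⟩ := C.psi2_y hv
    have := hy.symm.trans (h2.trans hy')
    have := Sum.inl.inj (Subtype.ext_iff.mp (Sum.inl.inj this))
    exact Subtype.ext_iff.mp this

/-- `psi2` collapses only within `X1`, within `X2`, or not at all. -/
lemma psi2_eq_cases {u v : V} (h : C.psi2 u = C.psi2 v) :
    (u ∈ C.X1 ∧ v ∈ C.X1) ∨ (u ∈ C.X2 ∧ v ∈ C.X2) ∨ u = v := by
  rcases C.tri u with hu | hu | hu <;> rcases C.tri v with hv | hv | hv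
  · exact Or.inl ⟨hu, hv⟩
  · exact absurd ((C.psi2_x1 hu).symm.trans (h.trans (C.psi2_x2 hv))) C.x1t_ne_inr
  · obtain ⟨p1, p2, hy⟩ := C.psi2_y hv
    exact absurd ((C.psi2_x1 hu).symm.trans (h.trans hy)) C.x1t_ne_inl_inl
  · exact absurd ((C.psi2_x2 hu).symm.trans (h.trans (C.psi2_x1 hv))) (fun h => C.x1t_ne_inr h.symm)
  · exact Or.inr (Or.inl ⟨hu, hv⟩)
  · obtain ⟨p1, p2, hy⟩ := C.psi2_y hv
    exact absurd ((C.psi2_x2 hu).symm.trans (h.trans hy)) (fun h => by cases h)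
  · obtain ⟨p1, p2, hy⟩ := C.psi2_y hu
    exact absurd (hy.symm.trans (h.trans (C.psi2_x1 hv))) (fun h => C.x1t_ne_inl_inl h.symm)
  · obtain ⟨p1, p2, hy⟩ := C.psi2_y hu
    exact absurd (hy.symm.trans (h.trans (C.psi2_x2 hv))) (fun h => by cases h)
  · obtain ⟨p1, p2, hy⟩ := C.psi2_y hu
    obtain ⟨q1, q2, hy'⟩ := C.psi2_y hv
    have := hy.symm.trans (h.trans hy')
    exact Or.inr (Or.inr (Subtype.ext_iff.mp (Sum.inl.inj
      (Subtype.ext_iff.mp (Sum.inl.inj this)))))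

lemma cMapY_eq_cases {u v : V} (h : cMap C.Y u = cMap C.Y v) :
    (u ∈ C.Y ∧ v ∈ C.Y) ∨ u = v := by
  by_cases hu : u ∈ C.Y <;> by_cases hv : v ∈ C.Y
  · exact Or.inl ⟨hu, hv⟩
  · exact absurd ((cMap_mem hu).symm.trans (h.trans (cMap_not_mem hv))) (fun h => by cases h)
  · exact absurd ((cMap_not_mem hu).symm.trans (h.trans (cMap_mem hv))) (fun h => by cases h)
  · exact Or.inr (Subtype.ext_iff.mp (Sum.inl.inj
      ((cMap_not_mem hu).symm.trans (h.trans (cMap_not_mem hv)))))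

/-- Synchronous lifting of a cut arc. -/
lemma sync_mk {a : A} (hnY : ¬ ((C.G.mu a).1 ∈ C.Y ∧ (C.G.mu a).2 ∈ C.Y))
    (h1 : ¬ ((C.G.mu a).1 ∈ C.X1 ∧ (C.G.mu a).2 ∈ C.X1))
    (h2 : ¬ ((C.G.mu a).1 ∈ C.X2 ∧ (C.G.mu a).2 ∈ C.X2)) :
    ∃ x : InterArc C.F1 C.F2,
      (C.F1.inter C.F2).mu x = (C.psi (C.G.mu a).1, C.psi (C.G.mu a).2) ∧
      (C.F1.inter C.F2).lab x = C.G.lab a := by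
  obtain ⟨α2, hmu2, hlab2⟩ := C.f2_mk h1 h2
  refine ⟨Sum.inr (Sum.inr ⟨(Quotient.mk _ ⟨a, hnY⟩, α2), hlab2.symm⟩), ?_, rfl⟩
  have hr : (C.F1.inter C.F2).mu
      (Sum.inr (Sum.inr ⟨(Quotient.mk _ ⟨a, hnY⟩, α2), hlab2.symm⟩)) =
      ((cMap C.Y (C.G.mu a).1, (C.F2.mu α2).1),
       (cMap C.Y (C.G.mu a).2, (C.F2.mu α2).2)) := rfl
  rw [hr, hmu2]
  rfl

/-- Every arc of `G` lifts to an arc of the intermediate product. -/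
lemma lift_arc (a : A) :
    ∃ x : InterArc C.F1 C.F2,
      (C.F1.inter C.F2).mu x = (C.psi (C.G.mu a).1, C.psi (C.G.mu a).2) ∧
      (C.F1.inter C.F2).lab x = C.G.lab a := by
  rcases C.tri (C.G.mu a).1 with ht | ht | ht <;> rcases C.tri (C.G.mu a).2 with hh | hh | hh
  · -- X1 → X1 : asynchronous F1 arc
    have hnY : ¬ ((C.G.mu a).1 ∈ C.Y ∧ (C.G.mu a).2 ∈ C.Y) := fun h => C.x1_not_y ht h.1
    refine ⟨Sum.inl ⟨(Quotient.mk _ ⟨a, hnY⟩, C.psi2 (C.G.mu a).1),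
      C.not_f2_lab (Or.inl ⟨ht, hh⟩)⟩, ?_, rfl⟩
    have hps : C.psi2 (C.G.mu a).1 = C.psi2 (C.G.mu a).2 :=
      (C.psi2_x1 ht).trans (C.psi2_x1 hh).symm
    show ((cMap C.Y (C.G.mu a).1, C.psi2 (C.G.mu a).1),
          (cMap C.Y (C.G.mu a).2, C.psi2 (C.G.mu a).1)) =
         ((cMap C.Y (C.G.mu a).1, C.psi2 (C.G.mu a).1),
          (cMap C.Y (C.G.mu a).2, C.psi2 (C.G.mu a).2))
    rw [hps]
  · -- X1 → X2 : synchronous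
    exact C.sync_mk (fun h => C.x1_not_y ht h.1) (fun h => C.x1_not_x2 h.2 hh)
      (fun h => C.x1_not_x2 ht h.1)
  · -- X1 → Y : synchronous
    exact C.sync_mk (fun h => C.x1_not_y ht h.1) (fun h => C.y_not_x1 hh h.2)
      (fun h => C.x1_not_x2 ht h.1)
  · -- X2 → X1 : forbidden
    exact absurd ⟨ht, hh⟩ (C.hnoback3 a)
  · -- X2 → X2 : asynchronous F1 arc
    have hnY : ¬ ((C.G.mu a).1 ∈ C.Y ∧ (C.G.mu a).2 ∈ C.Y) := fun h => C.x2_not_y ht h.1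
    refine ⟨Sum.inl ⟨(Quotient.mk _ ⟨a, hnY⟩, C.psi2 (C.G.mu a).1),
      C.not_f2_lab (Or.inr ⟨ht, hh⟩)⟩, ?_, rfl⟩
    have hps : C.psi2 (C.G.mu a).1 = C.psi2 (C.G.mu a).2 :=
      (C.psi2_x2 ht).trans (C.psi2_x2 hh).symm
    show ((cMap C.Y (C.G.mu a).1, C.psi2 (C.G.mu a).1),
          (cMap C.Y (C.G.mu a).2, C.psi2 (C.G.mu a).1)) =
         ((cMap C.Y (C.G.mu a).1, C.psi2 (C.G.mu a).1),
          (cMap C.Y (C.G.mu a).2, C.psi2 (C.G.mu a).2))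
    rw [hps]
  · -- X2 → Y : forbidden
    exact absurd ⟨ht, hh⟩ (C.hnoback2 a)
  · -- Y → X1 : forbidden
    exact absurd ⟨ht, hh⟩ (C.hnoback1 a)
  · -- Y → X2 : synchronous
    exact C.sync_mk (fun h => C.x2_not_y hh h.2) (fun h => C.y_not_x1 ht h.1)
      (fun h => C.y_not_x2 ht h.1)
  · -- Y → Y : asynchronous F2 arc
    have h1 : ¬ ((C.G.mu a).1 ∈ C.X1 ∧ (C.G.mu a).2 ∈ C.X1) := fun h => C.y_not_x1 ht h.1
    have h2 : ¬ ((C.G.mu a).1 ∈ C.X2 ∧ (C.G.mu a).2 ∈ C.X2) := fun h => C.y_not_x2 ht h.1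
    obtain ⟨α2, hmu2, hlab2⟩ := C.f2_mk h1 h2
    have hns : ¬ C.F1.HasLab (C.F2.lab α2) := by
      rw [hlab2]; exact C.not_f1_lab ht hh
    refine ⟨Sum.inr (Sum.inl ⟨(cMap C.Y (C.G.mu a).1, α2), hns⟩), ?_, hlab2⟩
    have hr : (C.F1.inter C.F2).mu (Sum.inr (Sum.inl ⟨(cMap C.Y (C.G.mu a).1, α2), hns⟩)) =
        ((cMap C.Y (C.G.mu a).1, (C.F2.mu α2).1),
         (cMap C.Y (C.G.mu a).1, (C.F2.mu α2).2)) := rfl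
    rw [hr, hmu2]
    show ((cMap C.Y (C.G.mu a).1, C.psi2 (C.G.mu a).1),
          (cMap C.Y (C.G.mu a).1, C.psi2 (C.G.mu a).2)) =
         ((cMap C.Y (C.G.mu a).1, C.psi2 (C.G.mu a).1),
          (cMap C.Y (C.G.mu a).2, C.psi2 (C.G.mu a).2))
    rw [cMap_mem ht, cMap_mem hh]

/-- There is an arc from `X1` into `Y`. -/
lemma arcXY : ∃ a : A, (C.G.mu a).1 ∈ C.X1 ∧ (C.G.mu a).2 ∈ C.Y := by
  obtain ⟨m, hm, hmin⟩ := exists_min C.hacyc C.hYne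
  have : ¬ C.G.InDegZero m := fun h => C.y_not_x1 hm (C.hsource m h)
  simp only [InDegZero, not_forall, not_not] at this
  obtain ⟨a, ha⟩ := this
  refine ⟨a, ?_, ha ▸ hm⟩
  rcases C.tri (C.G.mu a).1 with h | h | h
  · exact h
  · exact absurd ⟨h, ha ▸ hm⟩ (C.hnoback2 a)
  · exact absurd h (hmin a ha)

/-- There is an arc into `X2` from outside `X2`. -/
lemma arcIntoX2 : ∃ a : A, (C.G.mu a).1 ∉ C.X2 ∧ (C.G.mu a).2 ∈ C.X2 := by
  obtain ⟨m, hm, hmin⟩ := exists_min C.hacyc C.hX2ne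
  have : ¬ C.G.InDegZero m := fun h => C.x1_not_x2 (C.hsource m h) hm
  simp only [InDegZero, not_forall, not_not] at this
  obtain ⟨a, ha⟩ := this
  exact ⟨a, hmin a ha, ha ▸ hm⟩

/-- Image vertices are never removed. -/
lemma psi_not_rem : ∀ (n : ℕ) (v : V), C.psi v ∉ vrspRem C.F1 C.F2 n := by
  intro n
  induction n with
  | zero => intro v h; exact h
  | succ n ih =>
    intro v h
    rcases h with h | ⟨hpos, hall⟩
    · exact ih v h
    by_cases hv : ∃ a : A, (C.G.mu a).2 = v
    · obtain ⟨a, ha⟩ := hv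
      obtain ⟨x, hx, _⟩ := C.lift_arc a
      have h2 : ((C.F1.inter C.F2).mu x).2 = C.psi v := by
        rw [hx]; rw [ha]
      have h1 : ((C.F1.inter C.F2).mu x).1 = C.psi (C.G.mu a).1 := by
        rw [hx]
      exact ih (C.G.mu a).1 (h1 ▸ hall x h2)
    · push_neg at hv
      have hvx1 : v ∈ C.X1 := C.hsource v hv
      obtain ⟨bx, hbx⟩ := hpos
      match bx with
      | Sum.inl (α1, w) =>
        have hc : (C.F1.mu α1).2 = cMap C.Y v := congrArg Prod.fst hbx
        obtain ⟨c, hcY, hmu, _⟩ := contract_arc_elim C.G C.Y α1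
        rw [hmu] at hc
        simp only at hc
        rw [cMap_not_mem (C.x1_not_y hvx1)] at hc
        exact hv c (cMap_eq_inl hc)
      | Sum.inr (p, α2) =>
        have hc : (C.F2.mu α2).2 = C.psi2 v := congrArg Prod.snd hbx
        rw [C.psi2_x1 hvx1] at hc
        exact C.no_into_x1t α2 hc

lemma psi_not_removed (v : V) : C.psi v ∉ vrspRemoved C.F1 C.F2 := by
  intro h
  obtain ⟨n, hn⟩ := Set.mem_iUnion.mp h
  exact C.psi_not_rem n v hn

lemma not_indeg {v : V} (h : v ∉ C.X1) : ∃ a : A, (C.G.mu a).2 = v := by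
  by_contra hc
  push_neg at hc
  exact h (C.hsource v hc)

lemma tail_x1_of_head_x1 {c : A} (hh : (C.G.mu c).2 ∈ C.X1) : (C.G.mu c).1 ∈ C.X1 := by
  rcases C.tri (C.G.mu c).1 with h | h | h
  · exact h
  · exact absurd ⟨h, hh⟩ (C.hnoback3 c)
  · exact absurd ⟨h, hh⟩ (C.hnoback1 c)

lemma tail_x2_of_async {c : A} (hh : (C.G.mu c).2 ∈ C.X2)
    (hns : ¬ C.F2.HasLab (C.G.lab c)) : (C.G.mu c).1 ∈ C.X2 := by
  rcases C.tri (C.G.mu c).1 with h | h | h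
  · exact absurd (C.f2_hasLab.mpr ⟨c, fun hi => C.x1_not_x2 hi.2 hh,
      fun hi => C.x1_not_x2 h hi.1, rfl⟩) hns
  · exact h
  · exact absurd (C.f2_hasLab.mpr ⟨c, fun hi => C.x1_not_x2 hi.2 hh,
      fun hi => C.y_not_x2 h hi.1, rfl⟩) hns

lemma tail_y_of_async {c : A} (hh : (C.G.mu c).2 ∈ C.Y)
    (hns : ¬ C.F1.HasLab (C.G.lab c)) : (C.G.mu c).1 ∈ C.Y := by
  rcases C.tri (C.G.mu c).1 with h | h | h
  · exact absurd (C.f1_hasLab.mpr ⟨c, fun hi => C.x1_not_y h hi.1, rfl⟩) hns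
  · exact absurd ⟨h, hh⟩ (C.hnoback2 c)
  · exact h

lemma forward_cut {c : A}
    (h : (((C.G.mu c).1 ∈ C.X1 ∧ (C.G.mu c).2 ∈ C.Y) ∨
          ((C.G.mu c).1 ∈ C.Y ∧ (C.G.mu c).2 ∈ C.X1)) ∨
         (((C.G.mu c).1 ∈ C.Y ∧ (C.G.mu c).2 ∈ C.X2) ∨
          ((C.G.mu c).1 ∈ C.X2 ∧ (C.G.mu c).2 ∈ C.Y)) ∨
         (((C.G.mu c).1 ∈ C.X1 ∧ (C.G.mu c).2 ∈ C.X2) ∨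
          ((C.G.mu c).1 ∈ C.X2 ∧ (C.G.mu c).2 ∈ C.X1))) :
    ((C.G.mu c).1 ∈ C.X1 ∧ (C.G.mu c).2 ∈ C.Y) ∨
    ((C.G.mu c).1 ∈ C.Y ∧ (C.G.mu c).2 ∈ C.X2) ∨
    ((C.G.mu c).1 ∈ C.X1 ∧ (C.G.mu c).2 ∈ C.X2) := by
  rcases h with (h | h) | (h | h) | (h | h)
  · exact Or.inl h
  · exact absurd h (C.hnoback1 c)
  · exact Or.inr (Or.inl h)
  · exact absurd h (C.hnoback2 c)
  · exact Or.inr (Or.inr h)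
  · exact absurd h (C.hnoback3 c)

/-- Both components of a synchronous arc are forward cut arcs. -/
lemma sync_cuts {c1 c2 : A} (h1 : ¬ ((C.G.mu c1).1 ∈ C.Y ∧ (C.G.mu c1).2 ∈ C.Y))
    (h2a : ¬ ((C.G.mu c2).1 ∈ C.X1 ∧ (C.G.mu c2).2 ∈ C.X1))
    (h2b : ¬ ((C.G.mu c2).1 ∈ C.X2 ∧ (C.G.mu c2).2 ∈ C.X2))
    (hl : C.G.lab c2 = C.G.lab c1) :
    (((C.G.mu c1).1 ∈ C.X1 ∧ (C.G.mu c1).2 ∈ C.Y) ∨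
     ((C.G.mu c1).1 ∈ C.Y ∧ (C.G.mu c1).2 ∈ C.X2) ∨
     ((C.G.mu c1).1 ∈ C.X1 ∧ (C.G.mu c1).2 ∈ C.X2)) ∧
    (((C.G.mu c2).1 ∈ C.X1 ∧ (C.G.mu c2).2 ∈ C.Y) ∨
     ((C.G.mu c2).1 ∈ C.Y ∧ (C.G.mu c2).2 ∈ C.X2) ∨
     ((C.G.mu c2).1 ∈ C.X1 ∧ (C.G.mu c2).2 ∈ C.X2)) := by
  have h := C.hsync c2 c1 ⟨h2a, h2b⟩ h1 hl
  exact ⟨C.forward_cut (h c1 (Or.inr rfl)), C.forward_cut (h c2 (Or.inl rfl))⟩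

-- Positive-level constructions
lemma pos_inr (q : CVertex (imgIn C.X1 C.X2)) :
    PosLevelBox C.F1 C.F2 (Sum.inr (), q) := by
  obtain ⟨a, ht, hh⟩ := C.arcXY
  refine ⟨Sum.inl (Quotient.mk _ ⟨a, fun hi => C.x1_not_y ht hi.1⟩, q), ?_⟩
  show (cMap C.Y (C.G.mu a).2, q) = _
  rw [cMap_mem hh]

lemma pos_inl {u : {x : V // x ∉ C.Y}} (q : CVertex (imgIn C.X1 C.X2))
    {a : A} (ha : (C.G.mu a).2 = u.1) :
    PosLevelBox C.F1 C.F2 (Sum.inl u, q) := by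
  refine ⟨Sum.inl (Quotient.mk _ ⟨a, fun hi => (ha ▸ u.2) hi.2⟩, q), ?_⟩
  show (cMap C.Y (C.G.mu a).2, q) = _
  rw [ha, cMap_not_mem u.2]

lemma pos_x2t (p : CVertex C.Y) :
    PosLevelBox C.F1 C.F2 (p, Sum.inr ()) := by
  obtain ⟨a, ht, hh⟩ := C.arcIntoX2
  obtain ⟨α2, hmu2, _⟩ := C.f2_mk (fun hi => C.x1_not_x2 hi.2 hh) (fun hi => ht hi.1)
  refine ⟨Sum.inr (p, α2), ?_⟩
  show (p, (C.F2.mu α2).2) = _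
  rw [hmu2]
  show (p, C.psi2 (C.G.mu a).2) = _
  rw [C.psi2_x2 hh]

lemma pos_cw (p : CVertex C.Y) {w : {x : V // x ∉ C.X1}}
    (hw : (Sum.inl w : CVertex C.X1) ∉ imgIn C.X1 C.X2) (hwY : w.1 ∈ C.Y) :
    PosLevelBox C.F1 C.F2 (p, Sum.inl ⟨Sum.inl w, hw⟩) := by
  obtain ⟨a, ha⟩ := C.not_indeg (C.y_not_x1 hwY)
  obtain ⟨α2, hmu2, _⟩ := C.f2_mk (fun hi => C.y_not_x1 (ha ▸ hwY) hi.2)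
    (fun hi => C.y_not_x2 (ha ▸ hwY) hi.2)
  refine ⟨Sum.inr (p, α2), ?_⟩
  show (p, (C.F2.mu α2).2) = _
  rw [hmu2]
  show (p, C.psi2 (C.G.mu a).2) = _
  rw [ha]
  obtain ⟨h1, h2, hy⟩ := C.psi2_y hwY
  rw [hy]

end Ctx

noncomputable instance {V : Type} (X : Set V) [Fintype V] : Fintype (CVertex X) := by
  classical
  unfold CVertex
  infer_instance

noncomputable instance {V A L : Type} (G : LDMG V A L) (X : Set V) [Fintype A] :
    Fintype (CPre G X) := by
  classical
  unfold CPre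
  infer_instance

noncomputable instance {V A L : Type} (G : LDMG V A L) (X : Set V) [Fintype A] [Fintype V] :
    Fintype (CArc G X) := by
  classical
  unfold CArc
  infer_instance

namespace Ctx

variable {V A L : Type} [Fintype V] [Fintype A] (C : Ctx V A L)

/-- No asynchronous `F1`-arc enters the contracted `Y` vertex. -/
lemma no_asyncl_into_ytilde (α1 : CArc C.G C.Y) (hns : ¬ C.F2.HasLab (C.F1.lab α1))
    (h : (C.F1.mu α1).2 = Sum.inr ()) : False := by
  obtain ⟨c1, hcY, hmu, hlab⟩ := contract_arc_elim C.G C.Y α1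
  rw [hmu] at h
  have hh : (C.G.mu c1).2 ∈ C.Y := cMap_eq_inr h
  rw [hlab] at hns
  rcases C.tri (C.G.mu c1).1 with ht | ht | ht
  · exact hns (C.f2_hasLab.mpr ⟨c1, fun hi => C.y_not_x1 hh hi.2,
      fun hi => C.y_not_x2 hh hi.2, rfl⟩)
  · exact C.hnoback2 c1 ⟨ht, hh⟩
  · exact hcY ⟨ht, hh⟩

/-- No asynchronous `F2`-arc enters the contracted `X2` vertex. -/
lemma no_asyncr_into_x2tilde (α2 : CArc (C.G.contract C.X1) (imgIn C.X1 C.X2))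
    (hns : ¬ C.F1.HasLab (C.F2.lab α2)) (h : (C.F2.mu α2).2 = Sum.inr ()) : False := by
  obtain ⟨c2, h2a, h2b, hmu, hlab⟩ := C.f2_elim α2
  rw [hmu] at h
  have hh : (C.G.mu c2).2 ∈ C.X2 := C.psi2_eq_inr h
  rw [hlab] at hns
  exact hns (C.f1_hasLab.mpr ⟨c2, fun hi => C.x2_not_y hh hi.2, rfl⟩)

-- the various non-image shapes
lemma ne_psi1 {u : {x : V // x ∉ C.Y}} (hu : u.1 ∈ C.X1) (q0 : Unit) (v : V) :
    (Sum.inl u, (Sum.inr q0 : CVertex (imgIn C.X1 C.X2))) ≠ C.psi v := by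
  intro hv
  have h1 : (Sum.inl u : CVertex C.Y) = cMap C.Y v := congrArg Prod.fst hv
  have h2 : (Sum.inr q0 : CVertex (imgIn C.X1 C.X2)) = C.psi2 v := congrArg Prod.snd hv
  have hv2 : v ∈ C.X2 := C.psi2_eq_inr h2.symm
  have he : v = u.1 := cMap_eq_inl h1.symm
  exact C.x1_not_x2 (he ▸ hu) hv2

lemma ne_psi2 {u : {x : V // x ∉ C.Y}} (hu : u.1 ∈ C.X2)
    {hs : (Sum.inr () : CVertex C.X1) ∉ imgIn C.X1 C.X2} (v : V) :
    (Sum.inl u, (Sum.inl ⟨Sum.inr (), hs⟩ : CVertex (imgIn C.X1 C.X2))) ≠ C.psi v := by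
  intro hv
  have h1 : (Sum.inl u : CVertex C.Y) = cMap C.Y v := congrArg Prod.fst hv
  have h2 : (Sum.inl ⟨Sum.inr (), hs⟩ : CVertex (imgIn C.X1 C.X2)) = C.psi2 v :=
    congrArg Prod.snd hv
  have hv1 : v ∈ C.X1 := C.psi2_eq_x1t h2.symm
  have he : v = u.1 := cMap_eq_inl h1.symm
  exact C.x1_not_x2 hv1 (he ▸ hu)

lemma ne_psi3 {u : {x : V // x ∉ C.Y}} {w : {x : V // x ∉ C.X1}}
    {hs : (Sum.inl w : CVertex C.X1) ∉ imgIn C.X1 C.X2} (v : V) :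
    (Sum.inl u, (Sum.inl ⟨Sum.inl w, hs⟩ : CVertex (imgIn C.X1 C.X2))) ≠ C.psi v := by
  intro hv
  have h1 : (Sum.inl u : CVertex C.Y) = cMap C.Y v := congrArg Prod.fst hv
  have h2 : (Sum.inl ⟨Sum.inl w, hs⟩ : CVertex (imgIn C.X1 C.X2)) = C.psi2 v :=
    congrArg Prod.snd hv
  have hvw : v = w.1 := C.psi2_eq_inl_inl h2
  have he : v = u.1 := cMap_eq_inl h1.symm
  have hwY : w.1 ∈ C.Y := C.mem_Y_iff.mpr ⟨w.2, fun h => hs ((inl_mem_imgIn w.2).mpr h)⟩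
  exact u.2 (he ▸ (hvw ▸ hwY))

lemma ne_psi4 {p0 : Unit} {hs : (Sum.inr () : CVertex C.X1) ∉ imgIn C.X1 C.X2} (v : V) :
    ((Sum.inr p0 : CVertex C.Y),
      (Sum.inl ⟨Sum.inr (), hs⟩ : CVertex (imgIn C.X1 C.X2))) ≠ C.psi v := by
  intro hv
  have h1 : (Sum.inr p0 : CVertex C.Y) = cMap C.Y v := congrArg Prod.fst hv
  have h2 : (Sum.inl ⟨Sum.inr (), hs⟩ : CVertex (imgIn C.X1 C.X2)) = C.psi2 v :=
    congrArg Prod.snd hv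
  exact C.y_not_x1 (cMap_eq_inr h1.symm) (C.psi2_eq_x1t h2.symm)

lemma ne_psi5 (p0 q0 : Unit) (v : V) :
    ((Sum.inr p0 : CVertex C.Y), (Sum.inr q0 : CVertex (imgIn C.X1 C.X2))) ≠ C.psi v := by
  intro hv
  have h1 : (Sum.inr p0 : CVertex C.Y) = cMap C.Y v := congrArg Prod.fst hv
  have h2 : (Sum.inr q0 : CVertex (imgIn C.X1 C.X2)) = C.psi2 v := congrArg Prod.snd hv
  exact C.y_not_x2 (cMap_eq_inr h1.symm) (C.psi2_eq_inr h2.symm)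

/-- Rank function for the removal process. -/
noncomputable def rho : CVertex C.Y × CVertex (imgIn C.X1 C.X2) → ℕ :=
  fun z =>
    match z with
    | (Sum.inl u, Sum.inl ⟨Sum.inl w, _⟩) => C.G.height u.1 + C.G.height w.1 + 1
    | (Sum.inl u, _) => C.G.height u.1 + 1
    | (Sum.inr _, Sum.inr _) => 2 * Finset.univ.sup C.G.height + 2
    | (Sum.inr _, Sum.inl _) => 0

lemma height_le_sup (v : V) : C.G.height v ≤ Finset.univ.sup C.G.height :=
  Finset.le_sup (Finset.mem_univ v)

/-- Every vertex outside the image of `psi` is removed by the VRSP process. -/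
lemma bad_removed : ∀ (N : ℕ) (z : CVertex C.Y × CVertex (imgIn C.X1 C.X2)),
    C.rho z < N → (∀ v : V, z ≠ C.psi v) → z ∈ vrspRemoved C.F1 C.F2 := by
  intro N
  induction N with
  | zero => exact fun z hz => absurd hz (Nat.not_lt_zero _)
  | succ N ih =>
    rintro ⟨p, q⟩ hlt hbad
    have hle : C.rho (p, q) ≤ N := Nat.lt_succ_iff.mp hlt
    rcases p with u | p0
    · rcases q with ⟨s1, hs⟩ | q0
      · rcases s1 with w | s0
        · -- shape 3 : (inl u, C w)
          have hwY : w.1 ∈ C.Y :=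
            C.mem_Y_iff.mpr ⟨w.2, fun h => hs ((inl_mem_imgIn w.2).mpr h)⟩
          have hrz : C.rho (Sum.inl u, Sum.inl ⟨Sum.inl w, hs⟩) =
              C.G.height u.1 + C.G.height w.1 + 1 := rfl
          refine mem_vrspRemoved (C.pos_cw (Sum.inl u) hs hwY) ?_
          intro x hx
          rcases x with ⟨⟨α1, w'⟩, hns⟩ | ⟨⟨pp, α2⟩, hns⟩ | ⟨⟨α1, α2⟩, heq⟩
          · -- asynchronous F1 in-arc
            have hx1 : (C.F1.mu α1).2 = Sum.inl u := congrArg Prod.fst hx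
            have hx2 : w' = (Sum.inl ⟨Sum.inl w, hs⟩ : CVertex (imgIn C.X1 C.X2)) :=
              congrArg Prod.snd hx
            obtain ⟨c1, hcY, hmu, hlab⟩ := contract_arc_elim C.G C.Y α1
            have hhd : (C.G.mu c1).2 = u.1 := cMap_eq_inl (by rw [hmu] at hx1; exact hx1)
            have htl : (C.G.mu c1).1 ∈ C.X1 ∨ (C.G.mu c1).1 ∈ C.X2 := by
              rcases C.tri u.1 with h | h | h
              · exact Or.inl (C.tail_x1_of_head_x1 (by rw [hhd]; exact h))
              · refine Or.inr (C.tail_x2_of_async (by rw [hhd]; exact h) ?_)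
                rw [← hlab]; exact hns
              · exact absurd h u.2
            have htnY : (C.G.mu c1).1 ∉ C.Y := by
              rcases htl with h | h
              · exact C.x1_not_y h
              · exact C.x2_not_y h
            have htv : ((C.F1.inter C.F2).mu (Sum.inl ⟨(α1, w'), hns⟩)).1 =
                (Sum.inl ⟨(C.G.mu c1).1, htnY⟩, w') := by
              show ((C.F1.mu α1).1, w') = _
              rw [hmu]
              show (cMap C.Y (C.G.mu c1).1, w') = _
              rw [cMap_not_mem htnY]
              rfl
            rw [htv, hx2]
            apply ih
            · have hr2 : C.rho (Sum.inl ⟨(C.G.mu c1).1, htnY⟩,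
                  (Sum.inl ⟨Sum.inl w, hs⟩ : CVertex (imgIn C.X1 C.X2))) =
                  C.G.height (C.G.mu c1).1 + C.G.height w.1 + 1 := rfl
              have hh := height_lt C.hacyc (a := c1)
              rw [hhd] at hh
              exact lt_of_eq_of_lt hr2 (by omega)
            · exact fun v => C.ne_psi3 v
          · -- asynchronous F2 in-arc
            have hx2 : (C.F2.mu α2).2 =
                (Sum.inl ⟨Sum.inl w, hs⟩ : CVertex (imgIn C.X1 C.X2)) :=
              congrArg Prod.snd hx
            obtain ⟨c2, h2a, h2b, hmu2, hlab2⟩ := C.f2_elim α2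
            have hhd : (C.G.mu c2).2 = w.1 :=
              C.psi2_eq_inl_inl (by rw [hmu2] at hx2; exact hx2.symm)
            have ht2 : (C.G.mu c2).1 ∈ C.Y := by
              refine C.tail_y_of_async (by rw [hhd]; exact hwY) ?_
              rw [← hlab2]; exact hns
            have hpp : pp = Sum.inl u := congrArg Prod.fst hx
            obtain ⟨p1, p2, hy⟩ := C.psi2_y ht2
            have htv : ((C.F1.inter C.F2).mu (Sum.inr (Sum.inl ⟨(pp, α2), hns⟩))).1 =
                (pp, (Sum.inl ⟨Sum.inl ⟨(C.G.mu c2).1, p1⟩, p2⟩ :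
                  CVertex (imgIn C.X1 C.X2))) := by
              show (pp, (C.F2.mu α2).1) = _
              rw [hmu2]
              show (pp, C.psi2 (C.G.mu c2).1) = _
              rw [hy]
              rfl
            rw [htv, hpp]
            apply ih
            · have hr2 : C.rho (Sum.inl u,
                  (Sum.inl ⟨Sum.inl ⟨(C.G.mu c2).1, p1⟩, p2⟩ :
                    CVertex (imgIn C.X1 C.X2))) =
                  C.G.height u.1 + C.G.height (C.G.mu c2).1 + 1 := rfl
              have hh := height_lt C.hacyc (a := c2)
              rw [hhd] at hh
              exact lt_of_eq_of_lt hr2 (by omega)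
            · exact fun v => C.ne_psi3 v
          · -- synchronous in-arc
            have hx1 : (C.F1.mu α1).2 = Sum.inl u := congrArg Prod.fst hx
            have hx2 : (C.F2.mu α2).2 =
                (Sum.inl ⟨Sum.inl w, hs⟩ : CVertex (imgIn C.X1 C.X2)) :=
              congrArg Prod.snd hx
            obtain ⟨c1, hcY, hmu1, hlab1⟩ := contract_arc_elim C.G C.Y α1
            obtain ⟨c2, h2a, h2b, hmu2, hlab2⟩ := C.f2_elim α2
            have hl : C.G.lab c2 = C.G.lab c1 := by rw [← hlab2, ← heq, hlab1]
            obtain ⟨cut1, cut2⟩ := C.sync_cuts hcY h2a h2b hl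
            have hhd1 : (C.G.mu c1).2 = u.1 := cMap_eq_inl (by rw [hmu1] at hx1; exact hx1)
            have hhd2 : (C.G.mu c2).2 = w.1 :=
              C.psi2_eq_inl_inl (by rw [hmu2] at hx2; exact hx2.symm)
            have ht2 : (C.G.mu c2).1 ∈ C.X1 := by
              rcases cut2 with h | h | h
              · exact h.1
              · exact absurd h.2 (by rw [hhd2]; exact C.y_not_x2 hwY)
              · exact absurd h.2 (by rw [hhd2]; exact C.y_not_x2 hwY)
            rcases C.tri u.1 with hu | hu | hu
            · exfalso
              rcases cut1 with h | h | h
              · exact absurd h.2 (by rw [hhd1]; exact C.x1_not_y hu)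
              · exact absurd h.2 (by rw [hhd1]; exact C.x1_not_x2 hu)
              · exact absurd h.2 (by rw [hhd1]; exact C.x1_not_x2 hu)
            · have ht1 : (C.G.mu c1).1 ∈ C.Y := by
                rcases cut1 with h | h | h
                · exact absurd h.2 (by rw [hhd1]; exact C.x2_not_y hu)
                · exact h.1
                · exact absurd hl.symm (C.hlabsep c1 c2 (Or.inl h)
                    (Or.inl (Or.inl ⟨ht2, by rw [hhd2]; exact hwY⟩)))
              have htv : ((C.F1.inter C.F2).mu (Sum.inr (Sum.inr ⟨(α1, α2), heq⟩))).1 =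
                  ((Sum.inr () : CVertex C.Y), C.x1t) := by
                show ((C.F1.mu α1).1, (C.F2.mu α2).1) = _
                rw [hmu1, hmu2]
                show (cMap C.Y (C.G.mu c1).1, C.psi2 (C.G.mu c2).1) = _
                rw [cMap_mem ht1, C.psi2_x1 ht2]
                rfl
              rw [htv]
              apply ih
              · have hr2 : C.rho ((Sum.inr () : CVertex C.Y), C.x1t) = 0 := rfl
                exact lt_of_eq_of_lt hr2 (by omega)
              · exact fun v => C.ne_psi4 v
            · exact absurd hu u.2
        · -- q = x1t : shape 2 or image of X1
          rcases C.tri u.1 with hu | hu | hu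
          · exfalso
            apply hbad u.1
            show _ = (cMap C.Y u.1, C.psi2 u.1)
            rw [cMap_not_mem u.2, C.psi2_x1 hu]
            rfl
          · -- shape 2 : u ∈ X2
            obtain ⟨a, ha⟩ := C.not_indeg (C.x2_not_x1 hu)
            refine mem_vrspRemoved (C.pos_inl _ ha) ?_
            intro x hx
            rcases x with ⟨⟨α1, w'⟩, hns⟩ | ⟨⟨pp, α2⟩, hns⟩ | ⟨⟨α1, α2⟩, heq⟩
            · have hx1 : (C.F1.mu α1).2 = Sum.inl u := congrArg Prod.fst hx
              have hx2 : w' = (Sum.inl ⟨Sum.inr s0, hs⟩ : CVertex (imgIn C.X1 C.X2)) :=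
                congrArg Prod.snd hx
              obtain ⟨c1, hcY, hmu, hlab⟩ := contract_arc_elim C.G C.Y α1
              have hhd : (C.G.mu c1).2 = u.1 := cMap_eq_inl (by rw [hmu] at hx1; exact hx1)
              have ht1 : (C.G.mu c1).1 ∈ C.X2 := by
                refine C.tail_x2_of_async (by rw [hhd]; exact hu) ?_
                rw [← hlab]; exact hns
              have htv : ((C.F1.inter C.F2).mu (Sum.inl ⟨(α1, w'), hns⟩)).1 =
                  (Sum.inl ⟨(C.G.mu c1).1, C.x2_not_y ht1⟩, w') := by
                show ((C.F1.mu α1).1, w') = _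
                rw [hmu]
                show (cMap C.Y (C.G.mu c1).1, w') = _
                rw [cMap_not_mem (C.x2_not_y ht1)]
                rfl
              rw [htv, hx2]
              apply ih
              · have hr1 : C.rho (Sum.inl u,
                    (Sum.inl ⟨Sum.inr s0, hs⟩ : CVertex (imgIn C.X1 C.X2))) =
                    C.G.height u.1 + 1 := rfl
                have hr2 : C.rho (Sum.inl ⟨(C.G.mu c1).1, C.x2_not_y ht1⟩,
                    (Sum.inl ⟨Sum.inr s0, hs⟩ : CVertex (imgIn C.X1 C.X2))) =
                    C.G.height (C.G.mu c1).1 + 1 := rfl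
                have hh := height_lt C.hacyc (a := c1)
                rw [hhd] at hh
                exact lt_of_eq_of_lt hr2 (by omega)
              · exact fun v => C.ne_psi2 ht1 v
            · exact (C.no_into_x1t α2 (congrArg Prod.snd hx)).elim
            · exact (C.no_into_x1t α2 (congrArg Prod.snd hx)).elim
          · exact absurd hu u.2
      · -- q = inr : shape 1 or image of X2
        rcases C.tri u.1 with hu | hu | hu
        · -- shape 1 : u ∈ X1
          refine mem_vrspRemoved (C.pos_x2t _) ?_
          intro x hx
          rcases x with ⟨⟨α1, w'⟩, hns⟩ | ⟨⟨pp, α2⟩, hns⟩ | ⟨⟨α1, α2⟩, heq⟩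
          · have hx1 : (C.F1.mu α1).2 = Sum.inl u := congrArg Prod.fst hx
            have hx2 : w' = (Sum.inr q0 : CVertex (imgIn C.X1 C.X2)) :=
              congrArg Prod.snd hx
            obtain ⟨c1, hcY, hmu, hlab⟩ := contract_arc_elim C.G C.Y α1
            have hhd : (C.G.mu c1).2 = u.1 := cMap_eq_inl (by rw [hmu] at hx1; exact hx1)
            have ht1 : (C.G.mu c1).1 ∈ C.X1 :=
              C.tail_x1_of_head_x1 (by rw [hhd]; exact hu)
            have htv : ((C.F1.inter C.F2).mu (Sum.inl ⟨(α1, w'), hns⟩)).1 =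
                (Sum.inl ⟨(C.G.mu c1).1, C.x1_not_y ht1⟩, w') := by
              show ((C.F1.mu α1).1, w') = _
              rw [hmu]
              show (cMap C.Y (C.G.mu c1).1, w') = _
              rw [cMap_not_mem (C.x1_not_y ht1)]
              rfl
            rw [htv, hx2]
            apply ih
            · have hr1 : C.rho (Sum.inl u, (Sum.inr q0 : CVertex (imgIn C.X1 C.X2))) =
                  C.G.height u.1 + 1 := rfl
              have hr2 : C.rho (Sum.inl ⟨(C.G.mu c1).1, C.x1_not_y ht1⟩,
                  (Sum.inr q0 : CVertex (imgIn C.X1 C.X2))) =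
                  C.G.height (C.G.mu c1).1 + 1 := rfl
              have hh := height_lt C.hacyc (a := c1)
              rw [hhd] at hh
              exact lt_of_eq_of_lt hr2 (by omega)
            · exact fun v => C.ne_psi1 ht1 q0 v
          · exact (C.no_asyncr_into_x2tilde α2 hns (congrArg Prod.snd hx)).elim
          · -- synchronous : impossible, head of c1 in X1
            exfalso
            have hx1 : (C.F1.mu α1).2 = Sum.inl u := congrArg Prod.fst hx
            obtain ⟨c1, hcY, hmu1, hlab1⟩ := contract_arc_elim C.G C.Y α1
            obtain ⟨c2, h2a, h2b, hmu2, hlab2⟩ := C.f2_elim α2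
            have hl : C.G.lab c2 = C.G.lab c1 := by rw [← hlab2, ← heq, hlab1]
            obtain ⟨cut1, _⟩ := C.sync_cuts hcY h2a h2b hl
            have hhd1 : (C.G.mu c1).2 = u.1 := cMap_eq_inl (by rw [hmu1] at hx1; exact hx1)
            rcases cut1 with h | h | h
            · exact absurd h.2 (by rw [hhd1]; exact C.x1_not_y hu)
            · exact absurd h.2 (by rw [hhd1]; exact C.x1_not_x2 hu)
            · exact absurd h.2 (by rw [hhd1]; exact C.x1_not_x2 hu)
        · exfalso
          apply hbad u.1
          show _ = (cMap C.Y u.1, C.psi2 u.1)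
          rw [cMap_not_mem u.2, C.psi2_x2 hu]
        · exact absurd hu u.2
    · rcases q with ⟨s1, hs⟩ | q0
      · rcases s1 with w | s0
        · -- image of Y
          exfalso
          have hwY : w.1 ∈ C.Y :=
            C.mem_Y_iff.mpr ⟨w.2, fun h => hs ((inl_mem_imgIn w.2).mpr h)⟩
          apply hbad w.1
          obtain ⟨p1, p2, hy⟩ := C.psi2_y hwY
          show _ = (cMap C.Y w.1, C.psi2 w.1)
          rw [cMap_mem hwY, hy]
        · -- shape 4 : (ytilde, x1t)
          refine mem_vrspRemoved (C.pos_inr _) ?_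
          intro x hx
          exfalso
          rcases x with ⟨⟨α1, w'⟩, hns⟩ | ⟨⟨pp, α2⟩, hns⟩ | ⟨⟨α1, α2⟩, heq⟩
          · exact C.no_asyncl_into_ytilde α1 hns (congrArg Prod.fst hx)
          · exact C.no_into_x1t α2 (congrArg Prod.snd hx)
          · exact C.no_into_x1t α2 (congrArg Prod.snd hx)
      · -- shape 5 : (ytilde, x2t)
        refine mem_vrspRemoved (C.pos_inr _) ?_
        intro x hx
        rcases x with ⟨⟨α1, w'⟩, hns⟩ | ⟨⟨pp, α2⟩, hns⟩ | ⟨⟨α1, α2⟩, heq⟩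
        · exact (C.no_asyncl_into_ytilde α1 hns (congrArg Prod.fst hx)).elim
        · exact (C.no_asyncr_into_x2tilde α2 hns (congrArg Prod.snd hx)).elim
        · have hx1 : (C.F1.mu α1).2 = Sum.inr p0 := congrArg Prod.fst hx
          have hx2 : (C.F2.mu α2).2 = Sum.inr q0 := congrArg Prod.snd hx
          obtain ⟨c1, hcY, hmu1, hlab1⟩ := contract_arc_elim C.G C.Y α1
          obtain ⟨c2, h2a, h2b, hmu2, hlab2⟩ := C.f2_elim α2
          have hl : C.G.lab c2 = C.G.lab c1 := by rw [← hlab2, ← heq, hlab1]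
          obtain ⟨cut1, cut2⟩ := C.sync_cuts hcY h2a h2b hl
          have hhd1 : (C.G.mu c1).2 ∈ C.Y := cMap_eq_inr (by rw [hmu1] at hx1; exact hx1)
          have hhd2 : (C.G.mu c2).2 ∈ C.X2 := C.psi2_eq_inr (by rw [hmu2] at hx2; exact hx2)
          have ht1 : (C.G.mu c1).1 ∈ C.X1 := by
            rcases cut1 with h | h | h
            · exact h.1
            · exact absurd h.2 (C.y_not_x2 hhd1)
            · exact absurd h.2 (C.y_not_x2 hhd1)
          have hc1XY : (C.G.mu c1).1 ∈ C.X1 ∧ (C.G.mu c1).2 ∈ C.Y := ⟨ht1, hhd1⟩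
          have ht2 : (C.G.mu c2).1 ∈ C.Y := by
            rcases cut2 with h | h | h
            · exact absurd h.2 (C.x2_not_y hhd2)
            · exact h.1
            · exact absurd hl (C.hlabsep c2 c1 (Or.inl h) (Or.inl (Or.inl hc1XY)))
          obtain ⟨p1, p2, hy⟩ := C.psi2_y ht2
          have htv : ((C.F1.inter C.F2).mu (Sum.inr (Sum.inr ⟨(α1, α2), heq⟩))).1 =
              (Sum.inl ⟨(C.G.mu c1).1, C.x1_not_y ht1⟩,
               (Sum.inl ⟨Sum.inl ⟨(C.G.mu c2).1, p1⟩, p2⟩ :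
                 CVertex (imgIn C.X1 C.X2))) := by
            show ((C.F1.mu α1).1, (C.F2.mu α2).1) = _
            rw [hmu1, hmu2]
            show (cMap C.Y (C.G.mu c1).1, C.psi2 (C.G.mu c2).1) = _
            rw [cMap_not_mem (C.x1_not_y ht1), hy]
            rfl
          rw [htv]
          apply ih
          · have hr1 : C.rho ((Sum.inr p0 : CVertex C.Y),
                (Sum.inr q0 : CVertex (imgIn C.X1 C.X2))) =
                2 * Finset.univ.sup C.G.height + 2 := rfl
            have hr2 : C.rho (Sum.inl ⟨(C.G.mu c1).1, C.x1_not_y ht1⟩,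
                (Sum.inl ⟨Sum.inl ⟨(C.G.mu c2).1, p1⟩, p2⟩ :
                  CVertex (imgIn C.X1 C.X2))) =
                C.G.height (C.G.mu c1).1 + C.G.height (C.G.mu c2).1 + 1 := rfl
            have hb1 := C.height_le_sup (C.G.mu c1).1
            have hb2 := C.height_le_sup (C.G.mu c2).1
            exact lt_of_eq_of_lt hr2 (by omega)
          · exact fun v => C.ne_psi3 v

/-- Every arc of the intermediate product between image vertices comes from an arc of `G`. -/
lemma extract_arc (x : InterArc C.F1 C.F2) (u v : V) (ℓ : L)
    (hmu : (C.F1.inter C.F2).mu x = (C.psi u, C.psi v))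
    (hlab : (C.F1.inter C.F2).lab x = ℓ) :
    ∃ a : A, C.G.mu a = (u, v) ∧ C.G.lab a = ℓ := by
  rcases x with ⟨⟨α1, w'⟩, hns⟩ | ⟨⟨pp, α2⟩, hns⟩ | ⟨⟨α1, α2⟩, heq⟩
  · -- asynchronous F1 arc
    obtain ⟨c1, hcY, hmu1, hlab1⟩ := contract_arc_elim C.G C.Y α1
    have h11 : cMap C.Y (C.G.mu c1).1 = cMap C.Y u := by
      have hstep : (C.F1.mu α1).1 = cMap C.Y u := congrArg (fun t => t.1.1) hmu
      rw [hmu1] at hstep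
      exact hstep
    have h12 : cMap C.Y (C.G.mu c1).2 = cMap C.Y v := by
      have hstep : (C.F1.mu α1).2 = cMap C.Y v := congrArg (fun t => t.2.1) hmu
      rw [hmu1] at hstep
      exact hstep
    have hw1 : w' = C.psi2 u := congrArg (fun t => t.1.2) hmu
    have hw2 : w' = C.psi2 v := congrArg (fun t => t.2.2) hmu
    have hlab' : C.G.lab c1 = ℓ := by rw [← hlab1]; exact hlab
    have hpsi := C.psi2_eq_cases (hw1.symm.trans hw2)
    have huv : u ∉ C.Y → v ∉ C.Y → ∃ a : A, C.G.mu a = (u, v) ∧ C.G.lab a = ℓ := by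
      intro hu hv
      rcases C.cMapY_eq_cases h11 with ⟨_, h⟩ | h1e
      · exact absurd h hu
      rcases C.cMapY_eq_cases h12 with ⟨_, h⟩ | h2e
      · exact absurd h hv
      exact ⟨c1, Prod.ext h1e h2e, hlab'⟩
    rcases hpsi with ⟨hu, hv⟩ | ⟨hu, hv⟩ | he
    · exact huv (C.x1_not_y hu) (C.x1_not_y hv)
    · exact huv (C.x2_not_y hu) (C.x2_not_y hv)
    · subst he
      rcases C.cMapY_eq_cases h11 with ⟨ht, hu⟩ | h1e
      · rcases C.cMapY_eq_cases h12 with ⟨hh, _⟩ | h2e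
        · exact absurd ⟨ht, hh⟩ hcY
        · exact absurd ⟨ht, h2e ▸ hu⟩ hcY
      · rcases C.cMapY_eq_cases h12 with ⟨hh, hv⟩ | h2e
        · exact absurd ⟨h1e ▸ hv, hh⟩ hcY
        · exact ⟨c1, Prod.ext h1e h2e, hlab'⟩
  · -- asynchronous F2 arc
    obtain ⟨c2, h2a, h2b, hmu2, hlab2⟩ := C.f2_elim α2
    have h21 : C.psi2 (C.G.mu c2).1 = C.psi2 u := by
      have hstep : (C.F2.mu α2).1 = C.psi2 u := congrArg (fun t => t.1.2) hmu
      rw [hmu2] at hstep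
      exact hstep
    have h22 : C.psi2 (C.G.mu c2).2 = C.psi2 v := by
      have hstep : (C.F2.mu α2).2 = C.psi2 v := congrArg (fun t => t.2.2) hmu
      rw [hmu2] at hstep
      exact hstep
    have hlab' : C.G.lab c2 = ℓ := by rw [← hlab2]; exact hlab
    have hp1 : pp = cMap C.Y u := congrArg (fun t => t.1.1) hmu
    have hp2 : pp = cMap C.Y v := congrArg (fun t => t.2.1) hmu
    have huv : (u ∈ C.Y ∧ v ∈ C.Y) ∨ u = v := C.cMapY_eq_cases (hp1.symm.trans hp2)
    rcases C.psi2_eq_cases h21 with ⟨ht, hu⟩ | ⟨ht, hu⟩ | h1e <;>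
      rcases C.psi2_eq_cases h22 with ⟨hh, hv⟩ | ⟨hh, hv⟩ | h2e
    · exact absurd ⟨ht, hh⟩ h2a
    · exfalso
      rcases huv with ⟨h, _⟩ | he
      · exact C.x1_not_y hu h
      · exact C.x1_not_x2 hu (he ▸ hv)
    · exfalso
      rcases huv with ⟨h, _⟩ | he
      · exact C.x1_not_y hu h
      · exact h2a ⟨ht, h2e.symm ▸ (he.symm ▸ hu : v ∈ C.X1)⟩
    · exfalso
      rcases huv with ⟨h, _⟩ | he
      · exact C.x2_not_y hu h
      · exact C.x1_not_x2 hv (he ▸ hu)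
    · exact absurd ⟨ht, hh⟩ h2b
    · exfalso
      rcases huv with ⟨h, _⟩ | he
      · exact C.x2_not_y hu h
      · exact h2b ⟨ht, h2e.symm ▸ (he.symm ▸ hu : v ∈ C.X2)⟩
    · exfalso
      rcases huv with ⟨_, h⟩ | he
      · exact C.x1_not_y hv h
      · exact h2a ⟨h1e.symm ▸ (he ▸ hv : u ∈ C.X1), hh⟩
    · exfalso
      rcases huv with ⟨_, h⟩ | he
      · exact C.x2_not_y hv h
      · exact h2b ⟨h1e.symm ▸ (he ▸ hv : u ∈ C.X2), hh⟩
    · exact ⟨c2, Prod.ext h1e h2e, hlab'⟩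
  · -- synchronous arc
    obtain ⟨c1, hcY, hmu1, hlab1⟩ := contract_arc_elim C.G C.Y α1
    obtain ⟨c2, h2a, h2b, hmu2, hlab2⟩ := C.f2_elim α2
    have hl : C.G.lab c2 = C.G.lab c1 := by rw [← hlab2, ← heq, hlab1]
    obtain ⟨cut1, cut2⟩ := C.sync_cuts hcY h2a h2b hl
    have h11 : cMap C.Y (C.G.mu c1).1 = cMap C.Y u := by
      have hstep : (C.F1.mu α1).1 = cMap C.Y u := congrArg (fun t => t.1.1) hmu
      rw [hmu1] at hstep
      exact hstep
    have h12 : cMap C.Y (C.G.mu c1).2 = cMap C.Y v := by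
      have hstep : (C.F1.mu α1).2 = cMap C.Y v := congrArg (fun t => t.2.1) hmu
      rw [hmu1] at hstep
      exact hstep
    have h21 : C.psi2 (C.G.mu c2).1 = C.psi2 u := by
      have hstep : (C.F2.mu α2).1 = C.psi2 u := congrArg (fun t => t.1.2) hmu
      rw [hmu2] at hstep
      exact hstep
    have h22 : C.psi2 (C.G.mu c2).2 = C.psi2 v := by
      have hstep : (C.F2.mu α2).2 = C.psi2 v := congrArg (fun t => t.2.2) hmu
      rw [hmu2] at hstep
      exact hstep
    have hlab1' : C.G.lab c1 = ℓ := by rw [← hlab1]; exact hlab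
    rcases cut1 with ⟨ht1, hh1⟩ | ⟨ht1, hh1⟩ | ⟨ht1, hh1⟩
    · -- c1 ∈ [X1, Y]
      have h1e : (C.G.mu c1).1 = u := by
        rcases C.cMapY_eq_cases h11 with ⟨h, _⟩ | h
        · exact absurd h (C.x1_not_y ht1)
        · exact h
      have hu : u ∈ C.X1 := h1e ▸ ht1
      have hv : v ∈ C.Y := by
        rcases C.cMapY_eq_cases h12 with ⟨_, h⟩ | h
        · exact h
        · exact h ▸ hh1
      have ht2 : (C.G.mu c2).1 ∈ C.X1 := by
        rcases C.psi2_eq_cases h21 with ⟨h, _⟩ | ⟨_, h⟩ | h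
        · exact h
        · exact absurd h (C.x1_not_x2 hu)
        · exact h ▸ hu
      have h2e : (C.G.mu c2).2 = v := by
        rcases C.psi2_eq_cases h22 with ⟨_, h⟩ | ⟨_, h⟩ | h
        · exact absurd h (C.y_not_x1 hv)
        · exact absurd h (C.y_not_x2 hv)
        · exact h
      obtain ⟨c, hc, hcl⟩ := C.hbip1 c1 c2 (Or.inl ⟨ht1, hh1⟩)
        (Or.inl ⟨ht2, h2e ▸ hv⟩) hl.symm
      refine ⟨c, ?_, hcl.trans hlab1'⟩
      rw [hc, h1e, h2e]
    · -- c1 ∈ [Y, X2]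
      have hu : u ∈ C.Y := by
        rcases C.cMapY_eq_cases h11 with ⟨_, h⟩ | h
        · exact h
        · exact h ▸ ht1
      have h2e : (C.G.mu c1).2 = v := by
        rcases C.cMapY_eq_cases h12 with ⟨h, _⟩ | h
        · exact absurd h (C.x2_not_y hh1)
        · exact h
      have hv : v ∈ C.X2 := h2e ▸ hh1
      have h1e : (C.G.mu c2).1 = u := by
        rcases C.psi2_eq_cases h21 with ⟨_, h⟩ | ⟨_, h⟩ | h
        · exact absurd h (C.y_not_x1 hu)
        · exact absurd h (C.y_not_x2 hu)
        · exact h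
      have hh2 : (C.G.mu c2).2 ∈ C.X2 := by
        rcases C.psi2_eq_cases h22 with ⟨_, h⟩ | ⟨h, _⟩ | h
        · exact absurd hv (C.x1_not_x2 h)
        · exact h
        · exact h ▸ hv
      obtain ⟨c, hc, hcl⟩ := C.hbip2 c2 c1 (Or.inl ⟨h1e ▸ hu, hh2⟩)
        (Or.inl ⟨ht1, hh1⟩) hl
      refine ⟨c, ?_, hcl.trans ((hl.trans hlab1'))⟩
      rw [hc, h1e, h2e]
    · -- c1 ∈ [X1, X2]
      have h1e : (C.G.mu c1).1 = u := by
        rcases C.cMapY_eq_cases h11 with ⟨h, _⟩ | h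
        · exact absurd h (C.x1_not_y ht1)
        · exact h
      have h2e : (C.G.mu c1).2 = v := by
        rcases C.cMapY_eq_cases h12 with ⟨h, _⟩ | h
        · exact absurd h (C.x2_not_y hh1)
        · exact h
      exact ⟨c1, Prod.ext h1e h2e, hlab1'⟩

end Ctx
end LDMG
/-- Second decomposition theorem (relaxed): under the stated hypotheses on the three
disjoint nonempty sets `X₁`, `X₂`, `Y = V(G) ∖ (X₁ ∪ X₂)`,
`G ≅ (G/Y) ⊟ (G/X₁/X₂)` via `u ∈ X₁ ↦ (u, x̃₁)`, `v ∈ X₂ ↦ (v, x̃₂)`, `w ∈ Y ↦ (ỹ, w)`. -/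
theorem decomposition_two {V A L : Type} [Fintype V] [Fintype A]
    (G : LDMG V A L) (hacyc : G.Acyclic)
    (X1 X2 Y : Set V) (hX1ne : X1.Nonempty) (hX2ne : X2.Nonempty) (hYne : Y.Nonempty)
    (hdisj12 : Disjoint X1 X2) (hY : Y = (X1 ∪ X2)ᶜ)
    -- (i) equally-labelled arcs of [X1,Y] arc-induce a complete bipartite subgraph
    (hbip1 : ∀ a b : A,
      (((G.mu a).1 ∈ X1 ∧ (G.mu a).2 ∈ Y) ∨ ((G.mu a).1 ∈ Y ∧ (G.mu a).2 ∈ X1)) →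
      (((G.mu b).1 ∈ X1 ∧ (G.mu b).2 ∈ Y) ∨ ((G.mu b).1 ∈ Y ∧ (G.mu b).2 ∈ X1)) →
      G.lab a = G.lab b →
      ∃ c : A, G.mu c = ((G.mu a).1, (G.mu b).2) ∧ G.lab c = G.lab a)
    -- (ii) equally-labelled arcs of [Y,X2] arc-induce a complete bipartite subgraph
    (hbip2 : ∀ a b : A,
      (((G.mu a).1 ∈ Y ∧ (G.mu a).2 ∈ X2) ∨ ((G.mu a).1 ∈ X2 ∧ (G.mu a).2 ∈ Y)) →
      (((G.mu b).1 ∈ Y ∧ (G.mu b).2 ∈ X2) ∨ ((G.mu b).1 ∈ X2 ∧ (G.mu b).2 ∈ Y)) →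
      G.lab a = G.lab b →
      ∃ c : A, G.mu c = ((G.mu a).1, (G.mu b).2) ∧ G.lab c = G.lab a)
    -- (iii) labels of [X1,X2] occur on no arc of [X1,Y] ∪ [Y,X2]
    (hlabsep : ∀ a b : A,
      (((G.mu a).1 ∈ X1 ∧ (G.mu a).2 ∈ X2) ∨ ((G.mu a).1 ∈ X2 ∧ (G.mu a).2 ∈ X1)) →
      ((((G.mu b).1 ∈ X1 ∧ (G.mu b).2 ∈ Y) ∨ ((G.mu b).1 ∈ Y ∧ (G.mu b).2 ∈ X1)) ∨
       (((G.mu b).1 ∈ Y ∧ (G.mu b).2 ∈ X2) ∨ ((G.mu b).1 ∈ X2 ∧ (G.mu b).2 ∈ Y))) →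
      G.lab a ≠ G.lab b)
    -- (iv) the arcs coming from [X1,Y] ∪ [Y,X2] ∪ [X1,X2] are the only synchronising arcs
    --      of G/X1/X2 and G/Y
    (hsync : ∀ a b : A,
      (¬ ((G.mu a).1 ∈ X1 ∧ (G.mu a).2 ∈ X1) ∧ ¬ ((G.mu a).1 ∈ X2 ∧ (G.mu a).2 ∈ X2)) →
      ¬ ((G.mu b).1 ∈ Y ∧ (G.mu b).2 ∈ Y) →
      G.lab a = G.lab b →
      (∀ c : A, c = a ∨ c = b →
        (((G.mu c).1 ∈ X1 ∧ (G.mu c).2 ∈ Y) ∨ ((G.mu c).1 ∈ Y ∧ (G.mu c).2 ∈ X1)) ∨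
        (((G.mu c).1 ∈ Y ∧ (G.mu c).2 ∈ X2) ∨ ((G.mu c).1 ∈ X2 ∧ (G.mu c).2 ∈ Y)) ∨
        (((G.mu c).1 ∈ X1 ∧ (G.mu c).2 ∈ X2) ∨ ((G.mu c).1 ∈ X2 ∧ (G.mu c).2 ∈ X1))))
    -- (v) S'(G) ⊆ X1
    (hsource : ∀ v : V, G.InDegZero v → v ∈ X1)
    -- (vi) [X1,Y], [Y,X2] and [X1,X2] have no backward arcs
    (hnoback1 : ∀ a : A, ¬ ((G.mu a).1 ∈ Y ∧ (G.mu a).2 ∈ X1))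
    (hnoback2 : ∀ a : A, ¬ ((G.mu a).1 ∈ X2 ∧ (G.mu a).2 ∈ Y))
    (hnoback3 : ∀ a : A, ¬ ((G.mu a).1 ∈ X2 ∧ (G.mu a).2 ∈ X1)) :
    ∃ φ : V ≃ LDMG.VrspV (G.contract Y) ((G.contract X1).contract (LDMG.imgIn X1 X2)),
      (∀ v : V,
        (Subtype.val (φ v) :
            LDMG.CVertex Y × LDMG.CVertex (LDMG.imgIn X1 X2)) =
          (LDMG.cMap Y v, LDMG.cMap (LDMG.imgIn X1 X2) (LDMG.cMap X1 v))) ∧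
      (∀ (u v : V) (ℓ : L),
        (∃ a, G.mu a = (u, v) ∧ G.lab a = ℓ) ↔
        (∃ b, ((G.contract Y).vrsp ((G.contract X1).contract (LDMG.imgIn X1 X2))).mu b =
            (φ u, φ v) ∧
          ((G.contract Y).vrsp ((G.contract X1).contract (LDMG.imgIn X1 X2))).lab b = ℓ)) := by
    classical
  let C : LDMG.Ctx V A L := ⟨G, X1, X2, Y, hX1ne, hX2ne, hYne, hacyc, hdisj12, hY,
    hbip1, hbip2, hlabsep, hsync, hsource, hnoback1, hnoback2, hnoback3⟩
  have hinj : Function.Injective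
      (fun v => (⟨C.psi v, C.psi_not_removed v⟩ : LDMG.VrspV C.F1 C.F2)) :=
    fun a b h => C.psi_inj (congrArg Subtype.val h)
  have hsurj : Function.Surjective
      (fun v => (⟨C.psi v, C.psi_not_removed v⟩ : LDMG.VrspV C.F1 C.F2)) := by
    intro z
    by_cases hz : ∃ v, z.1 = C.psi v
    · obtain ⟨v, hv⟩ := hz
      exact ⟨v, Subtype.ext hv.symm⟩
    · push_neg at hz
      exact absurd (C.bad_removed (C.rho z.1 + 1) z.1 (Nat.lt_succ_self _) hz) z.2
  let φ0 : V ≃ LDMG.VrspV C.F1 C.F2 := Equiv.ofBijective _ ⟨hinj, hsurj⟩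
  refine ⟨φ0, fun v => rfl, fun u v ℓ => ⟨?_, ?_⟩⟩
  · rintro ⟨a, hamu, halab⟩
    obtain ⟨x, hx, hxl⟩ := C.lift_arc a
    have hx1 : ((C.F1.inter C.F2).mu x).1 = C.psi u := by rw [hx, hamu]
    have hx2 : ((C.F1.inter C.F2).mu x).2 = C.psi v := by rw [hx, hamu]
    refine ⟨⟨x, ?_, ?_⟩, ?_, ?_⟩
    · rw [hx1]; exact C.psi_not_removed u
    · rw [hx2]; exact C.psi_not_removed v
    · refine Prod.ext (Subtype.ext ?_) (Subtype.ext ?_)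
      · exact hx1
      · exact hx2
    · exact hxl.trans halab
  · rintro ⟨b, hbmu, hblab⟩
    have h1 : ((C.F1.inter C.F2).mu b.1).1 = C.psi u := congrArg (fun t => t.1.1) hbmu
    have h2 : ((C.F1.inter C.F2).mu b.1).2 = C.psi v := congrArg (fun t => t.2.1) hbmu
    exact C.extract_arc b.1 u v ℓ (Prod.ext h1 h2) hblab
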